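/- Let $\mathcal{H}$ and $W$ be real Hilbert spaces, $\{\varphi_k\}_{k=1}^{N+1}$ orthonormal in $\mathcal{H}$ with each $\varphi_k \in W$, and suppose the POD eigenvalues satisfy $\lambda_k = \beta \|\varphi_k\|_W^{-2} e^{-\gamma k}$ for all $k > r$ (with $\beta, \gamma > 0$) and $\lambda_1 \ge \cdots \ge \lambda_{N+1} > 0$. Define $u^n = (N+1)^{1/2}\lambda_{n+1}^{1/2}\varphi_{n+1}$ and let $P_r$ be the $\mathcal{H}$-orthogonal projection onto $\mathrm{span}\{\varphi_1,\dots,\varphi_r\}$. Then $\|u^r - P_r u^r\|_W^2 \ge \frac{\min\{1,\gamma\}}{2}(N+1)\sum_{k=r+1}^{N+1}\lambda_k \|\varphi_k\|_W^2$. -/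

import Mathlib

/-- Proposition 3.1 (second part): lower bound on the pointwise projection error at index r
for exponentially decaying POD eigenvalues. -/
theorem stmt_6 {H W : Type*} [NormedAddCommGroup H] [InnerProductSpace ℝ H]
    [NormedAddCommGroup W] [InnerProductSpace ℝ W]
    (J : H →ₗ[ℝ] W) (hJ : Function.Injective J)
    (N : ℕ) (φ : ℕ → H)
    (hφ : ∀ j ∈ Finset.Icc 1 (N + 1), ∀ k ∈ Finset.Icc 1 (N + 1),
      (inner ℝ (φ j) (φ k) : ℝ) = if j = k then 1 else 0)
    (lam : ℕ → ℝ) (hpos : ∀ k ∈ Finset.Icc 1 (N + 1), 0 < lam k)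
    (hmono : ∀ j k, 1 ≤ j → j ≤ k → k ≤ N + 1 → lam k ≤ lam j)
    (u : ℕ → H)
    (hu : ∀ n ≤ N, u n = (Real.sqrt ((N : ℝ) + 1) * Real.sqrt (lam (n + 1))) • φ (n + 1))
    (r : ℕ) (hr : r ≤ N)
    (β γ : ℝ) (hβ : 0 < β) (hγ : 0 < γ)
    (hlam : ∀ k, r < k → k ≤ N + 1 →
      lam k = β * (‖J (φ k)‖ ^ 2)⁻¹ * Real.exp (-γ * (k : ℝ)))
    (Pr : H →ₗ[ℝ] H)
    (hPr : ∀ x, Pr x = ∑ i ∈ Finset.Icc 1 r, (inner ℝ x (φ i) : ℝ) • φ i) :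
    ‖J (u r - Pr (u r))‖ ^ 2 ≥ (min 1 γ) / 2 * ((N : ℝ) + 1) *
      ∑ k ∈ Finset.Icc (r + 1) (N + 1), lam k * ‖J (φ k)‖ ^ 2 := by
  set q := Real.exp (-γ) with hqdef
  have hq0 : 0 < q := Real.exp_pos _
  have hq1 : q < 1 := by
    rw [hqdef, Real.exp_lt_one_iff]; linarith
  -- each term of the sum equals β * q^k
  have hterm : ∀ k ∈ Finset.Icc (r + 1) (N + 1), lam k * ‖J (φ k)‖ ^ 2 = β * q ^ k := by
    intro k hk
    simp only [Finset.mem_Icc] at hk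
    have hkI : k ∈ Finset.Icc 1 (N + 1) := Finset.mem_Icc.mpr ⟨by omega, hk.2⟩
    have hφk : φ k ≠ 0 := by
      intro h
      have := hφ k hkI k hkI
      simp [h] at this
    have hJφ : ‖J (φ k)‖ ^ 2 ≠ 0 := by
      have hne : J (φ k) ≠ 0 := fun h => hφk (hJ (by simpa using h))
      exact pow_ne_zero 2 (norm_ne_zero_iff.mpr hne)
    have hqk : q ^ k = Real.exp (-γ * (k : ℝ)) := by
      rw [hqdef, ← Real.exp_nat_mul]; ring_nf
    rw [hlam k (by omega) hk.2, hqk]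
    field_simp
    exact div_self (fun h => hJφ (by rw [h]; ring))
  -- geometric sum
  have hS : ∑ k ∈ Finset.Icc (r + 1) (N + 1), q ^ k = (q ^ (r + 1) - q ^ (N + 2)) / (1 - q) := by
    rw [← Finset.Ico_add_one_right_eq_Icc, geom_sum_Ico hq1.ne (by omega)]
    rw [div_eq_div_iff (by linarith) (by linarith [hq1])]
    ring
  have hSnn : 0 ≤ ∑ k ∈ Finset.Icc (r + 1) (N + 1), q ^ k :=
    Finset.sum_nonneg fun k _ => by positivity
  -- min 1 γ / 2 ≤ 1 - q
  have hkey : q * (1 + γ) ≤ 1 := by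
    have h1 : 1 + γ ≤ Real.exp γ := by linarith [Real.add_one_le_exp γ]
    have h2 : q * Real.exp γ = 1 := by
      rw [hqdef, ← Real.exp_add]; simp
    nlinarith
  have hmin : min 1 γ / 2 ≤ 1 - q := by
    rcases le_total γ 1 with h | h
    · rw [min_eq_right h]; nlinarith
    · rw [min_eq_left h]; nlinarith
  -- sum bound
  have hSle : min 1 γ / 2 * ∑ k ∈ Finset.Icc (r + 1) (N + 1), q ^ k ≤ q ^ (r + 1) := by
    have h1 : min 1 γ / 2 * ∑ k ∈ Finset.Icc (r + 1) (N + 1), q ^ k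
        ≤ (1 - q) * ∑ k ∈ Finset.Icc (r + 1) (N + 1), q ^ k :=
      mul_le_mul_of_nonneg_right hmin hSnn
    have h1q : (1:ℝ) - q ≠ 0 := by linarith
    have h2 : (1 - q) * ∑ k ∈ Finset.Icc (r + 1) (N + 1), q ^ k = q ^ (r + 1) - q ^ (N + 2) := by
      rw [hS]; field_simp
    have h3 : (0:ℝ) ≤ q ^ (N + 2) := by positivity
    linarith
  -- projection vanishes
  have hr1I : r + 1 ∈ Finset.Icc 1 (N + 1) := Finset.mem_Icc.mpr ⟨by omega, by omega⟩
  have hPr0 : Pr (u r) = 0 := by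
    rw [hPr, hu r hr]
    apply Finset.sum_eq_zero
    intro i hi
    simp only [Finset.mem_Icc] at hi
    have hiI : i ∈ Finset.Icc 1 (N + 1) := Finset.mem_Icc.mpr ⟨hi.1, by omega⟩
    rw [real_inner_smul_left, hφ (r + 1) hr1I i hiI, if_neg (by omega)]
    simp
  have hlampos : 0 < lam (r + 1) := hpos (r + 1) hr1I
  have hLHS : ‖J (u r - Pr (u r))‖ ^ 2 = ((N : ℝ) + 1) * lam (r + 1) * ‖J (φ (r + 1))‖ ^ 2 := by
    rw [hPr0, sub_zero, hu r hr, map_smul, norm_smul, mul_pow, Real.norm_eq_abs, sq_abs,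
      mul_pow, Real.sq_sqrt (by positivity), Real.sq_sqrt hlampos.le]
  have hterm1 : lam (r + 1) * ‖J (φ (r + 1))‖ ^ 2 = β * q ^ (r + 1) :=
    hterm (r + 1) (Finset.mem_Icc.mpr ⟨le_refl _, by omega⟩)
  rw [hLHS, Finset.sum_congr rfl hterm, ← Finset.mul_sum, ge_iff_le]
  calc min 1 γ / 2 * ((N : ℝ) + 1) * (β * ∑ k ∈ Finset.Icc (r + 1) (N + 1), q ^ k)
      = ((N : ℝ) + 1) * β * (min 1 γ / 2 * ∑ k ∈ Finset.Icc (r + 1) (N + 1), q ^ k) := by ring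
    _ ≤ ((N : ℝ) + 1) * β * q ^ (r + 1) :=
        mul_le_mul_of_nonneg_left hSle (by positivity)
    _ = ((N : ℝ) + 1) * lam (r + 1) * ‖J (φ (r + 1))‖ ^ 2 := by rw [mul_assoc, ← hterm1]; ring
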